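/- Let $(a_n)_{n \ge 0}$ be a complex sequence with $a_0 = 1$ satisfying $a_{n+1} = (\alpha + \frac{\beta}{n+\gamma}) a_n$. Let $d_n^{(k)}$ denote the determinant of the $n \times n$ Hankel matrix with $(i,j)$-entry $a_{i+j+k-2}$ ($1 \le i,j \le n$). Then $d_n^{(k)} = \prod_{1 \le i \le j \le n-1} \frac{i[\alpha(i+\gamma-1)+\beta][\alpha(i-1)-\beta]}{[i+\gamma-1][i+j+\gamma-2][i+j+\gamma-1]} \times \prod_{j=0}^{k-1}\prod_{i=1}^{n} \frac{\alpha(i+j+\gamma-1)+\beta}{i+j+\gamma+n-2}$, provided all denominators are nonzero. -/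

import Mathlib

open Finset
private def Ff (α β γ : ℂ) (t : ℕ) : ℂ := α * ((t : ℂ) + γ) + β
private def Gg (γ : ℂ) (t : ℕ) : ℂ := (t : ℂ) + γ
private def Cc (α β : ℂ) (m : ℕ) : ℂ := ∏ t ∈ range m, (β - α * (t : ℂ))

private def Xe (α β γ : ℂ) (k n r i j : ℕ) : ℂ :=
  Cc α β (min j r) * (∏ s ∈ range (j - min j r), Ff α β γ (i + k + s)) *
    (∏ s ∈ range (n - 1 - j), Gg γ (i + k + j + s))

private def Ye (γ : ℂ) (k n r i j : ℕ) : ℂ :=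
  (∏ u ∈ range (min i r), ((n - 1 - j - u : ℕ) : ℂ)) *
    (∏ s ∈ range (n - 1 - j - min i r), Gg γ (i + k + j + s))

private lemma det_colop {n : ℕ} (X Y : Matrix (Fin n) (Fin n) ℂ) (c : ℂ) (r : ℕ)
    (h0 : ∀ i j : Fin n, (j : ℕ) ≤ r → Y i j = X i j)
    (h1 : ∀ i j : Fin n, r < (j : ℕ) →
      Y i j = X i j - c * X i ⟨(j : ℕ) - 1, by have := j.isLt; omega⟩) :
    Y.det = X.det := by
  classical
  set E : Matrix (Fin n) (Fin n) ℂ := Matrix.of fun l j =>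
    (if l = j then (1 : ℂ) else 0) +
      (if (l : ℕ) + 1 = (j : ℕ) ∧ r < (j : ℕ) then -c else 0) with hE
  have hYE : Y = X * E := by
    ext i j
    rw [Matrix.mul_apply]
    simp only [hE, Matrix.of_apply, mul_add]
    rw [Finset.sum_add_distrib]
    have hs1 : (∑ l : Fin n, X i l * if l = j then (1 : ℂ) else 0) = X i j := by
      simp [mul_ite]
    rw [hs1]
    by_cases hr : r < (j : ℕ)
    · have hj1 : 1 ≤ (j : ℕ) := by omega
      have hs2 : (∑ l : Fin n, X i l *
          if (l : ℕ) + 1 = (j : ℕ) ∧ r < (j : ℕ) then -c else 0)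
          = X i ⟨(j : ℕ) - 1, by have := j.isLt; omega⟩ * -c := by
        rw [Finset.sum_eq_single (⟨(j : ℕ) - 1, by have := j.isLt; omega⟩ : Fin n)]
        · rw [if_pos ⟨by simp; omega, hr⟩]
        · intro l _ hl
          rw [if_neg, mul_zero]
          rintro ⟨hl1, -⟩
          exact hl (Fin.ext (by simp; omega))
        · intro habs; exact absurd (Finset.mem_univ _) habs
      rw [hs2, h1 i j hr]; ring
    · have hs2 : (∑ l : Fin n, X i l *
          if (l : ℕ) + 1 = (j : ℕ) ∧ r < (j : ℕ) then -c else 0) = 0 := by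
        apply Finset.sum_eq_zero; intro l _
        rw [if_neg, mul_zero]; rintro ⟨-, h⟩; exact hr h
      rw [hs2, add_zero, h0 i j (by omega)]
  have hdet : E.det = 1 := by
    have ht : E.BlockTriangular id := by
      intro i j hij
      simp only [id] at hij
      have hij' : (j : ℕ) < (i : ℕ) := hij
      have c1 : ¬ (i = j) := by intro hc; subst hc; omega
      have c2 : ¬ ((i : ℕ) + 1 = (j : ℕ) ∧ r < (j : ℕ)) := by omega
      simp only [hE, Matrix.of_apply, if_neg c1, if_neg c2, add_zero]
    rw [Matrix.det_of_upperTriangular ht]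
    apply Finset.prod_eq_one
    intro i _
    have c2 : ¬ ((i : ℕ) + 1 = (i : ℕ) ∧ r < (i : ℕ)) := by omega
    simp [hE, c2]
  rw [hYE, Matrix.det_mul, hdet, mul_one]

private lemma det_rowop {n : ℕ} (X Y : Matrix (Fin n) (Fin n) ℂ) (c : ℂ) (r : ℕ)
    (h0 : ∀ i j : Fin n, (i : ℕ) ≤ r → Y i j = X i j)
    (h1 : ∀ i j : Fin n, r < (i : ℕ) →
      Y i j = X i j - c * X ⟨(i : ℕ) - 1, by have := i.isLt; omega⟩ j) :
    Y.det = X.det := by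
  rw [← Matrix.det_transpose Y, ← Matrix.det_transpose X]
  exact det_colop X.transpose Y.transpose c r (fun i j h => h0 j i h) (fun i j h => h1 j i h)

private lemma detAnti : ∀ (n : ℕ) (A : Matrix (Fin n) (Fin n) ℂ),
    (∀ i j : Fin n, n ≤ (i : ℕ) + (j : ℕ) → A i j = 0) →
    A.det = (-1 : ℂ) ^ (∑ j ∈ Finset.range n, j) *
      ∏ i : Fin n, A i ⟨n - 1 - (i : ℕ), by have := i.isLt; omega⟩ := by
  intro n
  induction n with
  | zero => intro A h; simp [Matrix.det_fin_zero]
  | succ m ih =>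
    intro A h
    rw [Matrix.det_succ_row A (Fin.last m)]
    rw [Finset.sum_eq_single (0 : Fin (m + 1))]
    · have hA' := ih (A.submatrix (Fin.last m).succAbove ((0 : Fin (m+1)).succAbove))
        (by
          intro i j hij
          simp only [Matrix.submatrix_apply, Fin.succAbove_last, Fin.succAbove_zero]
          apply h
          simp only [Fin.coe_castSucc, Fin.val_succ]
          omega)
      rw [hA']
      rw [Fin.prod_univ_castSucc
        (f := fun i : Fin (m+1) => A i ⟨m + 1 - 1 - (i : ℕ), by have := i.isLt; omega⟩)]
      have hprod : (∏ i : Fin m,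
          (A.submatrix (Fin.last m).succAbove ((0 : Fin (m+1)).succAbove)) i
            ⟨m - 1 - (i : ℕ), by have := i.isLt; omega⟩)
          = ∏ i : Fin m, A (Fin.castSucc i) ⟨m + 1 - 1 - ((Fin.castSucc i : Fin (m+1)) : ℕ),
              by have := i.isLt; omega⟩ := by
        apply Finset.prod_congr rfl
        intro i _
        simp only [Matrix.submatrix_apply, Fin.succAbove_last, Fin.succAbove_zero]
        congr 1
        ext
        simp only [Fin.val_succ, Fin.coe_castSucc]
        have := i.isLt
        omega
      rw [hprod]
      have hlast : A (Fin.last m) ⟨m + 1 - 1 - ((Fin.last m : Fin (m+1)) : ℕ),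
          by omega⟩ = A (Fin.last m) 0 := by
        congr 1
        ext
        simp
      rw [hlast, Finset.sum_range_succ, pow_add]
      simp only [Fin.val_last, Fin.val_zero, add_zero]
      ring
    · intro j _ hj
      have : A (Fin.last m) j = 0 := by
        apply h
        simp only [Fin.val_last]
        have : (j : ℕ) ≠ 0 := fun hc => hj (Fin.ext (by simpa using hc))
        omega
      rw [this]; ring
    · intro habs; exact absurd (Finset.mem_univ _) habs

private lemma Xe_stable (α β γ : ℂ) (k n r i j : ℕ) (h : j ≤ r) :
    Xe α β γ k n (r + 1) i j = Xe α β γ k n r i j := by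
  unfold Xe
  rw [Nat.min_eq_left h, Nat.min_eq_left (by omega)]

private lemma Xe_step (α β γ : ℂ) (k n r i j : ℕ) (hr : r < j) (hj : j ≤ n - 1) :
    Xe α β γ k n (r + 1) i j = Xe α β γ k n r i j - α * Xe α β γ k n r i (j - 1) := by
  have h1 : min j r = r := Nat.min_eq_right (by omega)
  have h2 : min (j - 1) r = r := Nat.min_eq_right (by omega)
  have h3 : min j (r + 1) = r + 1 := Nat.min_eq_right (by omega)
  unfold Xe Cc
  rw [h1, h2, h3]
  rw [show j - (r + 1) = j - 1 - r from by omega, show j - r = (j - 1 - r) + 1 from by omega]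
  rw [prod_range_succ (fun s => Ff α β γ (i + k + s)) (j - 1 - r)]
  rw [prod_range_succ (fun t : ℕ => β - α * (t : ℂ)) r]
  rw [show n - 1 - (j - 1) = (n - 1 - j) + 1 from by omega]
  rw [prod_range_succ' (fun s => Gg γ (i + k + (j - 1) + s)) (n - 1 - j)]
  have hGs : (∏ s ∈ range (n - 1 - j), Gg γ (i + k + (j - 1) + (s + 1)))
      = ∏ s ∈ range (n - 1 - j), Gg γ (i + k + j + s) :=
    prod_congr rfl fun s _ => by congr 1; omega
  rw [hGs]
  simp only [Nat.add_zero]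
  have hkey : Ff α β γ (i + k + (j - 1 - r)) - α * Gg γ (i + k + (j - 1)) = β - α * (r : ℂ) := by
    unfold Ff Gg
    rw [show i + k + (j - 1) = (i + k + (j - 1 - r)) + r from by omega]
    push_cast
    ring
  linear_combination (-((∏ t ∈ range r, (β - α * (t : ℂ))) *
    (∏ s ∈ range (j - 1 - r), Ff α β γ (i + k + s)) *
    (∏ s ∈ range (n - 1 - j), Gg γ (i + k + j + s)))) * hkey

private lemma Ye_stable (γ : ℂ) (k n r i j : ℕ) (h : i ≤ r) :
    Ye γ k n (r + 1) i j = Ye γ k n r i j := by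
  unfold Ye
  rw [Nat.min_eq_left h, Nat.min_eq_left (by omega)]

private lemma Ye_step (γ : ℂ) (k n r i j : ℕ) (hr : r < i) :
    Ye γ k n (r + 1) i j = Ye γ k n r i j - 1 * Ye γ k n r (i - 1) j := by
  have h1 : min i r = r := Nat.min_eq_right (by omega)
  have h2 : min (i - 1) r = r := Nat.min_eq_right (by omega)
  have h3 : min i (r + 1) = r + 1 := Nat.min_eq_right (by omega)
  unfold Ye
  rw [h1, h2, h3, prod_range_succ (fun u : ℕ => ((n - 1 - j - u : ℕ) : ℂ)) r]
  rcases Nat.eq_zero_or_pos (n - 1 - j - r) with hM | hM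
  · rw [show n - 1 - j - (r + 1) = 0 from by omega, hM]
    simp
  · obtain ⟨m, hm⟩ : ∃ m, n - 1 - j - r = m + 1 := ⟨n - 1 - j - r - 1, by omega⟩
    rw [hm, show n - 1 - j - (r + 1) = m from by omega]
    rw [prod_range_succ (fun s => Gg γ (i + k + j + s)) m,
      prod_range_succ' (fun s => Gg γ (i - 1 + k + j + s)) m]
    have hGs : (∏ s ∈ range m, Gg γ (i - 1 + k + j + (s + 1)))
        = ∏ s ∈ range m, Gg γ (i + k + j + s) :=
      prod_congr rfl fun s _ => by congr 1; omega
    rw [hGs]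
    simp only [Nat.add_zero]
    have hkey : Gg γ (i + k + j + m) - Gg γ (i - 1 + k + j) = (m : ℂ) + 1 := by
      unfold Gg
      rw [show i + k + j + m = (i - 1 + k + j) + (m + 1) from by omega]
      push_cast
      ring
    push_cast
    linear_combination (-((∏ u ∈ range r, ((n - 1 - j - u : ℕ) : ℂ)) *
      (∏ s ∈ range m, Gg γ (i + k + j + s)))) * hkey

private lemma Icc_one (m : ℕ) (f : ℕ → ℂ) :
    ∏ i ∈ Icc 1 m, f i = ∏ t ∈ range m, f (t + 1) := by
  induction m with
  | zero => simp
  | succ m ih =>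
    rw [Finset.prod_Icc_succ_top (by omega), ih, prod_range_succ]

private lemma Icc_to_range (n : ℕ) (hn : 1 ≤ n) (T : ℕ → ℂ) (hT : T 0 = 1) :
    ∏ j ∈ Icc 1 (n - 1), T j = ∏ j ∈ range n, T j := by
  have hs : range n = insert 0 (Icc 1 (n - 1)) := by
    ext x
    simp only [Finset.mem_range, Finset.mem_insert, Finset.mem_Icc]
    omega
  rw [hs, Finset.prod_insert (by simp), hT, one_mul]

private lemma mid_lemma (γ : ℂ) (m : ℕ) :
    ∏ j ∈ range (m + 1), ∏ t ∈ range j, ((t : ℂ) + (j : ℂ) + γ - 1)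
      = ∏ j ∈ range m, ∏ t ∈ range (j + 1), Gg γ (t + j) := by
  rw [prod_range_succ' (fun j => ∏ t ∈ range j, ((t : ℂ) + (j : ℂ) + γ - 1)) m]
  simp only [prod_range_zero, mul_one]
  apply prod_congr rfl
  intro j _
  apply prod_congr rfl
  intro t _
  unfold Gg
  push_cast
  ring

private lemma rect_split (n : ℕ) (G : ℕ → ℂ) :
    ∏ i ∈ range n, ∏ s ∈ range (n - 1), G (i + s)
      = (∏ j ∈ range (n - 1), ∏ t ∈ range (j + 1), G (t + j)) *
        ∏ j ∈ range n, ∏ t ∈ range j, G (t + j) := by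
  classical
  have hL : (∏ i ∈ range n, ∏ s ∈ range (n - 1), G (i + s))
      = ∏ p ∈ (range n ×ˢ range (n - 1)), G (p.1 + p.2) := by
    rw [Finset.prod_product]
  rw [hL, ← Finset.prod_filter_mul_prod_filter_not (range n ×ˢ range (n - 1))
    (fun p => p.1 ≤ p.2) (fun p => G (p.1 + p.2))]
  congr 1
  · rw [Finset.prod_sigma' (range (n - 1)) (fun j => range (j + 1)) (fun j t => G (t + j))]
    apply Finset.prod_nbij' (fun p => ⟨p.2, p.1⟩) (fun q => (q.2, q.1))
    · intro p hp
      simp only [Finset.mem_filter, Finset.mem_product, Finset.mem_range] at hp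
      simp only [Finset.mem_sigma, Finset.mem_range]
      omega
    · intro q hq
      simp only [Finset.mem_sigma, Finset.mem_range] at hq
      simp only [Finset.mem_filter, Finset.mem_product, Finset.mem_range]
      omega
    · intro p _; rfl
    · intro q _; rfl
    · intro p _; rfl
  · rw [Finset.prod_sigma' (range n) (fun j => range j) (fun j t => G (t + j))]
    apply Finset.prod_nbij' (fun p => ⟨p.1, p.2⟩) (fun q => (q.1, q.2))
    · intro p hp
      simp only [Finset.mem_filter, Finset.mem_product, Finset.mem_range, not_le] at hp
      simp only [Finset.mem_sigma, Finset.mem_range]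
      omega
    · intro q hq
      simp only [Finset.mem_sigma, Finset.mem_range] at hq
      simp only [Finset.mem_filter, Finset.mem_product, Finset.mem_range, not_le]
      omega
    · intro p _; rfl
    · intro q _; rfl
    · intro p _
      simp only []
      congr 1
      omega

theorem stmt3 (a : ℕ → ℂ) (α β γ : ℂ) (n k : ℕ) (ha0 : a 0 = 1)
    (hγ : ∀ m : ℕ, (m : ℂ) + γ ≠ 0)
    (hrec : ∀ m : ℕ, a (m + 1) = (α + β / ((m : ℂ) + γ)) * a m)
    (h1 : ∀ i j : ℕ, 1 ≤ i → i ≤ j → j ≤ n - 1 →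
      ((i : ℂ) + γ - 1 ≠ 0 ∧ (i : ℂ) + j + γ - 2 ≠ 0 ∧ (i : ℂ) + j + γ - 1 ≠ 0))
    (h2 : ∀ i j : ℕ, 1 ≤ i → i ≤ n → j < k → (i : ℂ) + j + γ + n - 2 ≠ 0) :
    (Matrix.of fun i j : Fin n => a ((i : ℕ) + (j : ℕ) + k)).det =
      (∏ j ∈ Finset.Icc 1 (n - 1), ∏ i ∈ Finset.Icc 1 j,
          ((i : ℂ) * (α * ((i : ℂ) + γ - 1) + β) * (α * ((i : ℂ) - 1) - β)) /
            (((i : ℂ) + γ - 1) * ((i : ℂ) + j + γ - 2) * ((i : ℂ) + j + γ - 1))) *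
        ∏ j ∈ Finset.range k, ∏ i ∈ Finset.Icc 1 n,
          (α * ((i : ℂ) + j + γ - 1) + β) / ((i : ℂ) + j + γ + n - 2) := by
  rcases Nat.eq_zero_or_pos n with hn | hn
  · subst hn
    rw [show Finset.Icc 1 (0 - 1) = (∅ : Finset ℕ) from Finset.Icc_eq_empty (by omega)]
    simp [Matrix.det_fin_zero]
  · have hG0 : ∀ t : ℕ, Gg γ t ≠ 0 := fun t => by simpa [Gg] using hγ t
    have hPG0 : ∀ m : ℕ, (∏ t ∈ range m, Gg γ t) ≠ 0 :=
      fun m => Finset.prod_ne_zero_iff.mpr fun t _ => hG0 t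
    have ha : ∀ m : ℕ, a m = (∏ t ∈ range m, Ff α β γ t) / (∏ t ∈ range m, Gg γ t) := by
      intro m
      induction m with
      | zero => simpa using ha0
      | succ m ih =>
        rw [hrec m, ih, prod_range_succ, prod_range_succ]
        have h1' := hPG0 m
        have h2' := hγ m
        rw [show α + β / ((m : ℂ) + γ) = Ff α β γ m / Gg γ m from by
          unfold Ff Gg; rw [add_div, mul_div_cancel_right₀ _ h2']]
        rw [div_mul_div_comm, mul_comm (Ff α β γ m), mul_comm (Gg γ m)]
    set v : Fin n → ℂ := fun i =>
      (∏ t ∈ range ((i : ℕ) + k), Ff α β γ t) /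
        (∏ t ∈ range ((i : ℕ) + k + (n - 1)), Gg γ t) with hv
    set A0 : Matrix (Fin n) (Fin n) ℂ :=
      Matrix.of fun i j : Fin n => Xe α β γ k n 0 ↑i ↑j with hA0
    have e1 : (Matrix.of fun i j : Fin n => a ((i : ℕ) + (j : ℕ) + k))
        = Matrix.of fun i j : Fin n => v i * A0 i j := by
      ext i j
      simp only [Matrix.of_apply, hv, hA0]
      have hj : (j : ℕ) ≤ n - 1 := by have := j.isLt; omega
      rw [show (i : ℕ) + (j : ℕ) + k = ((i : ℕ) + k) + (j : ℕ) from by omega, ha]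
      unfold Xe
      rw [Nat.min_zero, Nat.sub_zero, show Cc α β 0 = 1 from by simp [Cc], one_mul]
      rw [prod_range_add (Ff α β γ) ((i : ℕ) + k) (j : ℕ)]
      rw [show (i : ℕ) + k + (n - 1) = ((i : ℕ) + k + (j : ℕ)) + (n - 1 - (j : ℕ)) from by omega]
      rw [prod_range_add (Gg γ) ((i : ℕ) + k + (j : ℕ)) (n - 1 - (j : ℕ))]
      have hW : (∏ s ∈ range (n - 1 - (j : ℕ)), Gg γ ((i : ℕ) + k + (j : ℕ) + s)) ≠ 0 :=
        Finset.prod_ne_zero_iff.mpr fun s _ => hG0 _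
      have hPG1 := hPG0 ((i : ℕ) + k + (j : ℕ))
      field_simp
    rw [e1, Matrix.det_mul_column v A0]
    have e2 : ∀ r : ℕ, (Matrix.of fun i j : Fin n => Xe α β γ k n r ↑i ↑j).det = A0.det := by
      intro r
      induction r with
      | zero => rw [hA0]
      | succ r ih =>
        rw [← ih]
        exact det_colop (Matrix.of fun i j : Fin n => Xe α β γ k n r ↑i ↑j)
          (Matrix.of fun i j : Fin n => Xe α β γ k n (r + 1) ↑i ↑j) α r
          (fun i j hjr => Xe_stable α β γ k n r ↑i ↑j hjr)
          (fun i j hjr => Xe_step α β γ k n r ↑i ↑j hjr (by have := j.isLt; omega))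
    rw [← e2 (n - 1)]
    set B0 : Matrix (Fin n) (Fin n) ℂ :=
      Matrix.of fun i j : Fin n => Ye γ k n 0 ↑i ↑j with hB0
    have e3 : (Matrix.of fun i j : Fin n => Xe α β γ k n (n - 1) ↑i ↑j)
        = Matrix.of fun i j : Fin n => Cc α β ↑j * B0 i j := by
      ext i j
      simp only [Matrix.of_apply, hB0]
      unfold Xe Ye
      rw [Nat.min_eq_left (show (j : ℕ) ≤ n - 1 from by have := j.isLt; omega), Nat.min_zero,
        Nat.sub_zero, Nat.sub_self]
      simp
    rw [e3, Matrix.det_mul_row]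
    have e4 : ∀ r : ℕ, (Matrix.of fun i j : Fin n => Ye γ k n r ↑i ↑j).det = B0.det := by
      intro r
      induction r with
      | zero => rw [hB0]
      | succ r ih =>
        rw [← ih]
        exact det_rowop (Matrix.of fun i j : Fin n => Ye γ k n r ↑i ↑j)
          (Matrix.of fun i j : Fin n => Ye γ k n (r + 1) ↑i ↑j) 1 r
          (fun i j hir => Ye_stable γ k n r ↑i ↑j hir)
          (fun i j hir => Ye_step γ k n r ↑i ↑j hir)
    rw [← e4 (n - 1)]
    have e5 : (Matrix.of fun i j : Fin n => Ye γ k n (n - 1) ↑i ↑j).det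
        = (-1 : ℂ) ^ (∑ j ∈ range n, j) * ∏ i ∈ range n, (Nat.factorial i : ℂ) := by
      rw [detAnti n _ (by
        intro i j hij
        simp only [Matrix.of_apply]
        unfold Ye
        apply mul_eq_zero_of_left
        apply Finset.prod_eq_zero (show n - 1 - (j : ℕ) ∈ range (min (i : ℕ) (n - 1)) from by
          simp only [Finset.mem_range]
          have := i.isLt
          have := j.isLt
          omega)
        simp)]
      congr 1
      rw [← Fin.prod_univ_eq_prod_range (fun m => (Nat.factorial m : ℂ)) n]
      apply Finset.prod_congr rfl
      intro i _
      simp only [Matrix.of_apply]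
      unfold Ye
      rw [Nat.min_eq_left (show (i : ℕ) ≤ n - 1 from by have := i.isLt; omega)]
      rw [show n - 1 - (n - 1 - (i : ℕ)) = (i : ℕ) from by have := i.isLt; omega]
      rw [Nat.sub_self, prod_range_zero, mul_one, ← Nat.cast_prod]
      congr 1
      calc ∏ u ∈ range (i : ℕ), ((i : ℕ) - u)
          = ∏ u ∈ range (i : ℕ), (((i : ℕ) - 1 - u) + 1) :=
            Finset.prod_congr rfl fun u hu => by
              have := Finset.mem_range.mp hu; omega
        _ = ∏ u ∈ range (i : ℕ), (u + 1) := Finset.prod_range_reflect (fun u => u + 1) (i : ℕ)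
        _ = Nat.factorial (i : ℕ) := Finset.prod_range_add_one_eq_factorial (i : ℕ)
    rw [e5]
    simp only [hv]
    rw [Fin.prod_univ_eq_prod_range (fun m =>
      (∏ t ∈ range (m + k), Ff α β γ t) / (∏ t ∈ range (m + k + (n - 1)), Gg γ t)) n]
    rw [Fin.prod_univ_eq_prod_range (fun m => Cc α β m) n]
    have hcast : ((n - 1 : ℕ) : ℂ) = (n : ℂ) - 1 := by
      have h := Nat.cast_sub (R := ℂ) (show 1 ≤ n from hn)
      simpa using h
    have hR1 : (∏ j ∈ Finset.Icc 1 (n - 1), ∏ i ∈ Finset.Icc 1 j,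
          ((i : ℂ) * (α * ((i : ℂ) + γ - 1) + β) * (α * ((i : ℂ) - 1) - β)) /
            (((i : ℂ) + γ - 1) * ((i : ℂ) + (j : ℂ) + γ - 2) * ((i : ℂ) + (j : ℂ) + γ - 1)))
        = (∏ j ∈ range n, ∏ t ∈ range j, (((t : ℂ) + 1) * Ff α β γ t * (α * (t : ℂ) - β)))
          / (∏ j ∈ range n, ∏ t ∈ range j,
              (Gg γ t * ((t : ℂ) + (j : ℂ) + γ - 1) * Gg γ (t + j))) := by
      rw [Icc_to_range n hn (fun j => ∏ i ∈ Finset.Icc 1 j,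
          ((i : ℂ) * (α * ((i : ℂ) + γ - 1) + β) * (α * ((i : ℂ) - 1) - β)) /
            (((i : ℂ) + γ - 1) * ((i : ℂ) + (j : ℂ) + γ - 2) * ((i : ℂ) + (j : ℂ) + γ - 1)))
        (by simp [show Finset.Icc 1 0 = (∅ : Finset ℕ) from Finset.Icc_eq_empty (by omega)])]
      rw [← Finset.prod_div_distrib]
      apply Finset.prod_congr rfl
      intro j _
      rw [Icc_one, ← Finset.prod_div_distrib]
      apply Finset.prod_congr rfl
      intro t _
      congr 1
      · unfold Ff; push_cast; ring
      · unfold Gg; push_cast; ring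
    have hR2 : (∏ j ∈ range k, ∏ i ∈ Finset.Icc 1 n,
          (α * ((i : ℂ) + (j : ℂ) + γ - 1) + β) / ((i : ℂ) + (j : ℂ) + γ + (n : ℂ) - 2))
        = (∏ j ∈ range k, ∏ t ∈ range n, Ff α β γ (t + j))
          / (∏ j ∈ range k, ∏ t ∈ range n, Gg γ (t + j + (n - 1))) := by
      rw [← Finset.prod_div_distrib]
      apply Finset.prod_congr rfl
      intro j _
      rw [Icc_one, ← Finset.prod_div_distrib]
      apply Finset.prod_congr rfl
      intro t _
      congr 1
      · unfold Ff; push_cast; ring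
      · unfold Gg; push_cast [hcast]; ring
    rw [hR1, hR2]
    rw [Finset.prod_div_distrib]
    have hb1 : (∏ i ∈ range n, ∏ t ∈ range (i + k), Ff α β γ t)
        = (∏ j ∈ range n, ∏ t ∈ range j, Ff α β γ t) *
          (∏ j ∈ range k, ∏ t ∈ range n, Ff α β γ (t + j)) := by
      calc ∏ i ∈ range n, ∏ t ∈ range (i + k), Ff α β γ t
          = ∏ i ∈ range n, ((∏ t ∈ range i, Ff α β γ t) * ∏ s ∈ range k, Ff α β γ (i + s)) :=
            Finset.prod_congr rfl fun i _ => prod_range_add (Ff α β γ) i k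
        _ = (∏ i ∈ range n, ∏ t ∈ range i, Ff α β γ t) *
            ∏ i ∈ range n, ∏ s ∈ range k, Ff α β γ (i + s) := Finset.prod_mul_distrib
        _ = _ := by
            congr 1
            rw [Finset.prod_comm]
    have hb2 : (∏ i ∈ range n, ∏ t ∈ range (i + k + (n - 1)), Gg γ t)
        = ((∏ j ∈ range n, ∏ t ∈ range j, Gg γ t) *
            ((∏ j ∈ range (n - 1), ∏ t ∈ range (j + 1), Gg γ (t + j)) *
              (∏ j ∈ range n, ∏ t ∈ range j, Gg γ (t + j)))) *
          (∏ j ∈ range k, ∏ t ∈ range n, Gg γ (t + j + (n - 1))) := by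
      calc ∏ i ∈ range n, ∏ t ∈ range (i + k + (n - 1)), Gg γ t
          = ∏ i ∈ range n, (((∏ t ∈ range i, Gg γ t) * ∏ s ∈ range (n - 1), Gg γ (i + s)) *
              ∏ s ∈ range k, Gg γ (i + (n - 1) + s)) := by
            apply Finset.prod_congr rfl
            intro i _
            rw [show i + k + (n - 1) = (i + (n - 1)) + k from by omega,
              prod_range_add (Gg γ) (i + (n - 1)) k, prod_range_add (Gg γ) i (n - 1)]
        _ = ((∏ i ∈ range n, ∏ t ∈ range i, Gg γ t) *
              ∏ i ∈ range n, ∏ s ∈ range (n - 1), Gg γ (i + s)) *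
            ∏ i ∈ range n, ∏ s ∈ range k, Gg γ (i + (n - 1) + s) := by
            rw [Finset.prod_mul_distrib, Finset.prod_mul_distrib]
        _ = _ := by
            rw [rect_split n (Gg γ)]
            congr 1
            rw [Finset.prod_comm]
            apply Finset.prod_congr rfl
            intro j _
            apply Finset.prod_congr rfl
            intro t _
            congr 1
            omega
    have hb3 : (∏ j ∈ range n, ∏ t ∈ range j, (((t : ℂ) + 1) * Ff α β γ t * (α * (t : ℂ) - β)))
        = ((∏ j ∈ range n, (Nat.factorial j : ℂ)) *
            (∏ j ∈ range n, ∏ t ∈ range j, Ff α β γ t)) *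
          ((-1 : ℂ) ^ (∑ j ∈ range n, j) * ∏ j ∈ range n, Cc α β j) := by
      calc ∏ j ∈ range n, ∏ t ∈ range j, (((t : ℂ) + 1) * Ff α β γ t * (α * (t : ℂ) - β))
          = ∏ j ∈ range n, (((Nat.factorial j : ℂ) * ∏ t ∈ range j, Ff α β γ t) *
              ((-1 : ℂ) ^ j * Cc α β j)) := by
            apply Finset.prod_congr rfl
            intro j _
            rw [Finset.prod_mul_distrib, Finset.prod_mul_distrib]
            congr 1
            · congr 1
              rw [← Finset.prod_range_add_one_eq_factorial j]
              push_cast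
              rfl
            · unfold Cc
              calc ∏ t ∈ range j, (α * (t : ℂ) - β)
                  = ∏ t ∈ range j, ((-1) * (β - α * (t : ℂ))) :=
                    Finset.prod_congr rfl fun t _ => by ring
                _ = (-1 : ℂ) ^ j * ∏ t ∈ range j, (β - α * (t : ℂ)) := by
                    rw [Finset.prod_mul_distrib, Finset.prod_const, Finset.card_range]
        _ = _ := by
            rw [Finset.prod_mul_distrib, Finset.prod_mul_distrib, Finset.prod_mul_distrib,
              Finset.prod_pow_eq_pow_sum]
    have hb4 : (∏ j ∈ range n, ∏ t ∈ range j,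
          (Gg γ t * ((t : ℂ) + (j : ℂ) + γ - 1) * Gg γ (t + j)))
        = ((∏ j ∈ range n, ∏ t ∈ range j, Gg γ t) *
            (∏ j ∈ range (n - 1), ∏ t ∈ range (j + 1), Gg γ (t + j))) *
          (∏ j ∈ range n, ∏ t ∈ range j, Gg γ (t + j)) := by
      calc ∏ j ∈ range n, ∏ t ∈ range j, (Gg γ t * ((t : ℂ) + (j : ℂ) + γ - 1) * Gg γ (t + j))
          = ∏ j ∈ range n, ((∏ t ∈ range j, Gg γ t) *
              (∏ t ∈ range j, ((t : ℂ) + (j : ℂ) + γ - 1)) * ∏ t ∈ range j, Gg γ (t + j)) :=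
            Finset.prod_congr rfl fun j _ => by
              rw [Finset.prod_mul_distrib, Finset.prod_mul_distrib]
        _ = (∏ j ∈ range n, ∏ t ∈ range j, Gg γ t) *
            (∏ j ∈ range n, ∏ t ∈ range j, ((t : ℂ) + (j : ℂ) + γ - 1)) *
            ∏ j ∈ range n, ∏ t ∈ range j, Gg γ (t + j) := by
            rw [Finset.prod_mul_distrib, Finset.prod_mul_distrib]
        _ = _ := by
            have hm := mid_lemma γ (n - 1)
            rw [show n - 1 + 1 = n from by omega] at hm
            rw [hm]
    rw [hb1, hb2, hb3, hb4]
    have hq1 : (∏ j ∈ range n, ∏ t ∈ range j, Gg γ t) ≠ 0 :=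
      Finset.prod_ne_zero_iff.mpr fun j _ => hPG0 j
    have hq2 : (∏ j ∈ range (n - 1), ∏ t ∈ range (j + 1), Gg γ (t + j)) ≠ 0 :=
      Finset.prod_ne_zero_iff.mpr fun j _ => Finset.prod_ne_zero_iff.mpr fun t _ => hG0 _
    have hq3 : (∏ j ∈ range n, ∏ t ∈ range j, Gg γ (t + j)) ≠ 0 :=
      Finset.prod_ne_zero_iff.mpr fun j _ => Finset.prod_ne_zero_iff.mpr fun t _ => hG0 _
    have hq4 : (∏ j ∈ range k, ∏ t ∈ range n, Gg γ (t + j + (n - 1))) ≠ 0 :=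
      Finset.prod_ne_zero_iff.mpr fun j _ => Finset.prod_ne_zero_iff.mpr fun t _ => hG0 _
    field_simp
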